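/- Fix a, b ∈ ℤ/4ℤ, R = R_{a+bw}, n ≥ 1, and let C ⊆ Rⁿ be an R-submodule. Then the DNA code Φ(C) = {Φ(c) : c ∈ C} ⊆ Σⁿ is closed under the complement operation y ↦ y^C if and only if the constant vector (2+2w, 2+2w, …, 2+2w) belongs to C. -/

import Mathlib

open Polynomial

/-- The base ring ℤ/4ℤ. -/
abbrev Z4 := ZMod 4

/-- The polynomial X² − (a + bX) over ℤ/4ℤ. -/
noncomputable def wPoly (a b : Z4) : Z4[X] := X ^ 2 - (C b * X + C a)

/-- The ring R_{a+bw} = (ℤ/4ℤ)[X]/(X² − (a + bX)); every element is uniquely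
x₀ + x₁·w with x₀, x₁ ∈ ℤ/4ℤ, and w² = a + b·w. -/
abbrev Rw (a b : Z4) : Type := AdjoinRoot (wPoly a b)

/-- The element w of R_{a+bw}. -/
noncomputable def ww (a b : Z4) : Rw a b := AdjoinRoot.root _

instance (a b : Z4) : Nonempty (Rw a b) := ⟨0⟩

/-- The Gau map expressed on coordinates:  ψ(x₀, x₁) is the DNA pair (in Fin 4 × Fin 4,
with A,G,C,T encoded as 0,1,2,3) assigned to the ring element x₀ + x₁·w. -/
def psi (p : Z4 × Z4) : Fin 4 × Fin 4 :=
  match p.1.val, p.2.val with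
  | 0, 0 => (3, 3)
  | 1, 0 => (0, 1)
  | 2, 0 => (2, 2)
  | 3, 0 => (1, 0)
  | 0, 1 => (0, 2)
  | 1, 1 => (0, 3)
  | 2, 1 => (1, 3)
  | 3, 1 => (1, 2)
  | 0, 2 => (1, 1)
  | 1, 2 => (2, 3)
  | 2, 2 => (0, 0)
  | 3, 2 => (3, 2)
  | 0, 3 => (2, 0)
  | 1, 3 => (2, 1)
  | 2, 3 => (3, 1)
  | _, _ => (3, 0)

/-- `phi` is a Gau map on R_{a+bw}: on the element x₀ + x₁·w it takes the value
prescribed by the table ψ. -/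
def IsGauMap (a b : Z4) (phi : Rw a b → Fin 4 × Fin 4) : Prop :=
  ∀ x₀ x₁ : Z4,
    phi (algebraMap Z4 (Rw a b) x₀ + algebraMap Z4 (Rw a b) x₁ * ww a b) = psi (x₀, x₁)

/-- Coordinatewise extension Φ of a Gau map φ to vectors. -/
def PhiV (a b : Z4) (phi : Rw a b → Fin 4 × Fin 4) (n : ℕ) (x : Fin n → Rw a b) :
    Fin n → Fin 4 × Fin 4 :=
  fun j => phi (x j)

/-- Inverse Φ⁻¹ of the coordinatewise extension of a Gau map. -/
noncomputable def PhiVinv (a b : Z4) (phi : Rw a b → Fin 4 × Fin 4) (n : ℕ)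
    (y : Fin n → Fin 4 × Fin 4) : Fin n → Rw a b :=
  fun j => Function.invFun phi (y j)

/-- DNA-string reversal y ↦ y^R on Σⁿ: read the length-2n DNA string backwards,
i.e. reverse the order of the pairs and swap the two entries of each pair. -/
def dnaRev (n : ℕ) (y : Fin n → Fin 4 × Fin 4) : Fin n → Fin 4 × Fin 4 :=
  fun j => ((y j.rev).2, (y j.rev).1)

/-- Watson–Crick complement y ↦ y^C on Σⁿ. -/
def dnaCompl (n : ℕ) (y : Fin n → Fin 4 × Fin 4) : Fin n → Fin 4 × Fin 4 :=
  fun j => (3 - (y j).1, 3 - (y j).2)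

/-- Vector reversal g ↦ g^r on Rⁿ. -/
def vecRev {α : Type*} (n : ℕ) (x : Fin n → α) : Fin n → α :=
  fun j => x j.rev

instance : Fact (1 < 4) := ⟨by norm_num⟩

lemma deg_lin_lt (a b : Z4) : (C b * X + C a).degree < ((2 : ℕ) : WithBot ℕ) := by
  refine lt_of_le_of_lt degree_linear_le ?_
  exact_mod_cast (by norm_num : (1 : ℕ) < 2)

lemma wPoly_monic (a b : Z4) : (wPoly a b).Monic := by
  simpa [wPoly] using monic_X_pow_sub (deg_lin_lt a b)

lemma wPoly_degree (a b : Z4) : (wPoly a b).degree = 2 := by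
  have h : (C b * X + C a).degree < (X ^ 2 : Z4[X]).degree := by
    rw [degree_X_pow]; exact deg_lin_lt a b
  rw [wPoly, degree_sub_eq_left_of_degree_lt h, degree_X_pow]
  rfl

lemma repr_exists (a b : Z4) (z : Rw a b) :
    ∃ x₀ x₁ : Z4, z = algebraMap Z4 (Rw a b) x₀ + algebraMap Z4 (Rw a b) x₁ * ww a b := by
  obtain ⟨p, rfl⟩ := AdjoinRoot.mk_surjective z
  set r := p %ₘ wPoly a b with hr
  have hdeg : r.degree < 2 := by
    simpa [wPoly_degree a b] using degree_modByMonic_lt p (wPoly_monic a b)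
  have hle : r.degree ≤ 1 := by
    rcases hd : r.degree with _ | m
    · exact bot_le
    · rw [hd] at hdeg
      have hm : m < 2 := WithBot.coe_lt_coe.mp hdeg
      exact WithBot.coe_le_coe.mpr (Nat.lt_succ_iff.mp hm)
  have hrc : r = C (r.coeff 1) * X + C (r.coeff 0) := eq_X_add_C_of_degree_le_one hle
  refine ⟨r.coeff 0, r.coeff 1, ?_⟩
  have hmod : r + wPoly a b * (p /ₘ wPoly a b) = p := modByMonic_add_div p (wPoly a b)
  calc AdjoinRoot.mk (wPoly a b) p
      = AdjoinRoot.mk (wPoly a b) (r + wPoly a b * (p /ₘ wPoly a b)) := by rw [hmod]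
    _ = AdjoinRoot.mk (wPoly a b) r := by
        rw [map_add, map_mul, AdjoinRoot.mk_self, zero_mul, add_zero]
    _ = algebraMap Z4 (Rw a b) (r.coeff 0) + algebraMap Z4 (Rw a b) (r.coeff 1) * ww a b := by
        conv_lhs => rw [hrc]
        rw [map_add, map_mul]
        simp [ww, AdjoinRoot.algebraMap_eq, AdjoinRoot.mk_X, add_comm]

lemma repr_unique (a b x₀ x₁ y₀ y₁ : Z4)
    (h : algebraMap Z4 (Rw a b) x₀ + algebraMap Z4 (Rw a b) x₁ * ww a b =
         algebraMap Z4 (Rw a b) y₀ + algebraMap Z4 (Rw a b) y₁ * ww a b) :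
    x₀ = y₀ ∧ x₁ = y₁ := by
  have h0 : AdjoinRoot.mk (wPoly a b) (C (x₁ - y₁) * X + C (x₀ - y₀)) = 0 := by
    rw [map_add, map_mul, AdjoinRoot.mk_X]
    have e : ∀ c : Z4, AdjoinRoot.mk (wPoly a b) (C c) = algebraMap Z4 (Rw a b) c := by
      intro c; rfl
    rw [e, e, map_sub, map_sub]
    have hww : AdjoinRoot.root (wPoly a b) = ww a b := rfl
    rw [hww]
    linear_combination h
  rw [AdjoinRoot.mk_eq_zero] at h0
  have hz : (C (x₁ - y₁) * X + C (x₀ - y₀) : Z4[X]) = 0 := by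
    obtain ⟨s, hs⟩ := h0
    rcases eq_or_ne s 0 with rfl | hsne
    · simpa using hs
    · exfalso
      have h1 : (C (x₁ - y₁) * X + C (x₀ - y₀) : Z4[X]).degree ≤ 1 := degree_linear_le
      have h2 : (wPoly a b * s).degree = 2 + s.degree := by
        rw [mul_comm, (wPoly_monic a b).degree_mul, wPoly_degree, add_comm]
      rw [hs, h2] at h1
      have h3 : (0 : WithBot ℕ) ≤ s.degree := by
        rcases hd : s.degree with _ | m
        · exact absurd (degree_eq_bot.mp hd) hsne
        · exact WithBot.coe_le_coe.mpr (Nat.zero_le m)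
      have h4 : (2 : WithBot ℕ) ≤ 2 + s.degree := by
        calc (2 : WithBot ℕ) = 2 + 0 := by rw [add_zero]
          _ ≤ 2 + s.degree := by exact add_le_add (le_refl 2) h3
      exact absurd (le_trans h4 h1) (by decide)
  have c0 := congrArg (fun p => Polynomial.coeff p 0) hz
  have c1 := congrArg (fun p => Polynomial.coeff p 1) hz
  simp [coeff_add, coeff_C_mul, coeff_X, sub_eq_zero] at c0 c1
  exact ⟨c0, c1⟩

lemma psi_inj : Function.Injective psi := by decide

lemma psi_compl (p : Z4 × Z4) :
    psi (p.1 + 2, p.2 + 2) = (3 - (psi p).1, 3 - (psi p).2) := by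
  revert p; decide

lemma phi_shift (a b : Z4) (phi : Rw a b → Fin 4 × Fin 4) (hphi : IsGauMap a b phi)
    (z : Rw a b) :
    phi (z + (2 + 2 * ww a b)) = (3 - (phi z).1, 3 - (phi z).2) := by
  obtain ⟨x₀, x₁, rfl⟩ := repr_exists a b z
  have e2 : (2 : Rw a b) = algebraMap Z4 (Rw a b) 2 := by
    rw [map_ofNat]
  have key : algebraMap Z4 (Rw a b) x₀ + algebraMap Z4 (Rw a b) x₁ * ww a b
      + (2 + 2 * ww a b)
      = algebraMap Z4 (Rw a b) (x₀ + 2) + algebraMap Z4 (Rw a b) (x₁ + 2) * ww a b := by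
    rw [map_add, map_add, e2]; ring
  rw [key, hphi, hphi]
  exact psi_compl (x₀, x₁)

lemma phi_inj (a b : Z4) (phi : Rw a b → Fin 4 × Fin 4) (hphi : IsGauMap a b phi) :
    Function.Injective phi := by
  intro z z' h
  obtain ⟨x₀, x₁, rfl⟩ := repr_exists a b z
  obtain ⟨y₀, y₁, rfl⟩ := repr_exists a b z'
  rw [hphi, hphi] at h
  have := psi_inj h
  rw [Prod.mk.injEq] at this
  rw [this.1, this.2]

/-- for an R-submodule C ⊆ Rⁿ, the DNA code Φ(C) is closed under the
Watson–Crick complement y ↦ y^C iff the constant vector (2+2w, …, 2+2w) belongs to C. -/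
theorem dna_code_complement_iff (a b : Z4) (n : ℕ) (hn : 1 ≤ n)
    (phi : Rw a b → Fin 4 × Fin 4) (hphi : IsGauMap a b phi)
    (C : Submodule (Rw a b) (Fin n → Rw a b)) :
    (∀ y ∈ PhiV a b phi n '' (C : Set (Fin n → Rw a b)),
        dnaCompl n y ∈ PhiV a b phi n '' (C : Set (Fin n → Rw a b))) ↔
      (fun _ : Fin n => 2 + 2 * ww a b) ∈ C := by
  set v : Fin n → Rw a b := fun _ => 2 + 2 * ww a b with hv
  constructor
  · intro h
    obtain ⟨c, hc, hΦ⟩ := h (PhiV a b phi n 0) ⟨0, C.zero_mem, rfl⟩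
    have hcv : c = v := by
      funext j
      apply phi_inj a b phi hphi
      have h1 : phi (c j) = (3 - (phi (0 : Rw a b)).1, 3 - (phi (0 : Rw a b)).2) :=
        congrFun hΦ j
      have h2 : phi (v j) = (3 - (phi (0 : Rw a b)).1, 3 - (phi (0 : Rw a b)).2) := by
        have := phi_shift a b phi hphi 0
        rw [zero_add] at this
        exact this
      rw [h1, h2]
    exact hcv ▸ hc
  · intro hvC y hy
    obtain ⟨c, hc, rfl⟩ := hy
    refine ⟨c + v, C.add_mem hc hvC, ?_⟩
    funext j
    exact phi_shift a b phi hphi (c j)
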